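/- Cramer-type formula for the orthogonal complement: for linearly independent vectors h_1,…,h_r in a real inner product space and any vector u, the component of u orthogonal to L = span(h_1,…,h_r) equals the ratio of the formal (r+1)×(r+1) determinant with first row (u, h_1,…,h_r) and subsequent rows (⟨u,h_i⟩, ⟨h_1,h_i⟩,…,⟨h_r,h_i⟩) for i=1,…,r, expanded along the first row, divided by the Gram determinant det(⟨h_i,h_j⟩). -/

import Mathlib

open RealInnerProductSpace

/-- Cramer-type formula for the orthogonal complement: for linearly independent
`h_1,…,h_r` and any `u`, the component of `u` orthogonal to
`L = span(h_1,…,h_r)` equals the formal `(r+1)×(r+1)` determinant with first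
row `(u, h_1, …, h_r)` and rows `(⟪u,h_i⟫, ⟪h_1,h_i⟫, …, ⟪h_r,h_i⟫)`,
expanded along the first row (an alternating sum of numeric cofactors times the
first-row vectors), divided by the Gram determinant `det ⟪h_i, h_j⟫`. -/
theorem stmt16 {V : Type*} [NormedAddCommGroup V] [InnerProductSpace ℝ V]
    [FiniteDimensional ℝ V] {r : ℕ} (h : Fin r → V)
    (hli : LinearIndependent ℝ h) (u : V) :
    let L := Submodule.span ℝ (Set.range h)
    let v : Fin (r + 1) → V := Fin.cons u h
    let A : Matrix (Fin r) (Fin (r + 1)) ℝ := Matrix.of fun i j => ⟪v j, h i⟫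
    let G : Matrix (Fin r) (Fin r) ℝ := Matrix.of fun i j => ⟪h i, h j⟫
    u - (Submodule.orthogonalProjectionOnto L u : V) =
      (G.det)⁻¹ •
        ∑ j : Fin (r + 1),
          ((-1 : ℝ) ^ (j : ℕ) * (A.submatrix id j.succAbove).det) • v j := by
  intro L v A G
  set c : Fin (r + 1) → ℝ :=
    fun j => (-1 : ℝ) ^ (j : ℕ) * (A.submatrix id j.succAbove).det with hc
  set S : V := ∑ j : Fin (r + 1), c j • v j with hSdef
  -- Gram determinant is nonzero
  have hG : G.det ≠ 0 := by
    intro hdet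
    obtain ⟨w, hw0, hwG⟩ := Matrix.exists_vecMul_eq_zero_iff.2 hdet
    have hx : ∀ j, ⟪∑ i, w i • h i, h j⟫ = 0 := by
      intro j
      have := congrFun hwG j
      simpa [Matrix.vecMul, dotProduct, sum_inner, real_inner_smul_left,
        G] using this
    have hxx : (∑ i, w i • h i) = 0 := by
      have : ⟪∑ i, w i • h i, ∑ j, w j • h j⟫ = 0 := by
        rw [inner_sum]
        simp only [real_inner_smul_right]
        exact Finset.sum_eq_zero fun j _ => by rw [hx j, mul_zero]
      exact inner_self_eq_zero.1 this
    exact hw0 (funext fun i => (Fintype.linearIndependent_iff.1 hli) w hxx i)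
  -- inner product of S with each h i vanishes (determinant with repeated row)
  have hkey : ∀ i, ⟪S, h i⟫ = 0 := by
    intro i
    have hS : ⟪S, h i⟫ = ∑ j, c j * ⟪v j, h i⟫ := by
      rw [hSdef, sum_inner]
      exact Finset.sum_congr rfl fun j _ => real_inner_smul_left _ _ _
    set M : Matrix (Fin (r + 1)) (Fin (r + 1)) ℝ :=
      Matrix.of (Fin.cons (fun j => A i j) (fun k => A k)) with hM
    have hM0 : ∀ j, M 0 j = ⟪v j, h i⟫ := fun j => rfl
    have hMsub : ∀ j : Fin (r + 1),
        M.submatrix Fin.succ j.succAbove = A.submatrix id j.succAbove := by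
      intro j; ext p q; rfl
    have hMdet : M.det = 0 := by
      apply Matrix.det_zero_of_row_eq (i := 0) (j := i.succ) (Fin.succ_ne_zero i).symm
      ext j; rfl
    have hexp := Matrix.det_succ_row_zero M
    rw [hMdet] at hexp
    rw [hS]
    rw [show (0 : ℝ) = ∑ j : Fin (r + 1),
        (-1 : ℝ) ^ (j : ℕ) * M 0 j * (M.submatrix Fin.succ j.succAbove).det from hexp]
    refine Finset.sum_congr rfl fun j _ => ?_
    rw [hMsub j, hM0 j, hc]
    ring
  -- split off the j = 0 term : S = G.det • u + z with z in the span
  have hc0 : c 0 = G.det := by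
    rw [hc]
    simp only [Fin.val_zero, pow_zero, one_mul]
    rw [← Matrix.det_transpose]
    congr 1
  set z : V := ∑ k : Fin r, c k.succ • h k with hz
  have hSsplit : S = G.det • u + z := by
    rw [hSdef, Fin.sum_univ_succ, hc0, hz]
    rfl
  have hzL : z ∈ L := by
    refine Submodule.sum_mem _ fun k _ => Submodule.smul_mem _ _ ?_
    exact Submodule.subset_span ⟨k, rfl⟩
  -- characterize the orthogonal projection
  have hproj : (Submodule.orthogonalProjectionOnto L u : V) = u - (G.det)⁻¹ • S := by
    apply Submodule.eq_starProjection_of_mem_of_inner_eq_zero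
    · have : u - (G.det)⁻¹ • S = -((G.det)⁻¹ • z) := by
        rw [hSsplit, smul_add, smul_smul, inv_mul_cancel₀ hG, one_smul]
        abel
      rw [this]
      exact Submodule.neg_mem _ (Submodule.smul_mem _ _ hzL)
    · intro w hw
      have hSw : ∀ x ∈ L, ⟪S, x⟫ = 0 := by
        intro x hx
        induction hx using Submodule.span_induction with
        | mem x hx => obtain ⟨i, rfl⟩ := hx; exact hkey i
        | zero => simp
        | add x y _ _ hx hy => rw [inner_add_right, hx, hy, add_zero]
        | smul a x _ hx => rw [real_inner_smul_right, hx, mul_zero]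
      have : u - (u - (G.det)⁻¹ • S) = (G.det)⁻¹ • S := by abel
      rw [this, real_inner_smul_left, hSw w hw, mul_zero]
  rw [hproj]
  abel
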